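/- arXiv:0708.4045 — 2 statements merged into one kernel-verified Lean document; each statement's English description precedes it below -/
import Mathlib

section
/- Let A ⊆ B be a unital inclusion of C*-algebras with a faithful conditional expectation E : B → A of index-finite type, let B_2 be the basic construction with dual conditional expectation E_2 : B_2 → B, and let {(v_k, v_k*)}_{k=1}^n ⊆ (A′ ∩ B_2) × (A′ ∩ B_2) be a quasi-basis for E_2. Then for every projection p ∈ A, the restriction F of E_2 to the corner pB_2p is a faithful conditional expectation from pB_2p onto pBp, and {(pv_k, pv_k*)}_{k=1}^n is a quasi-basis for F. -/
open scoped BigOperators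

/-- An element of a `*`-algebra is a projection if it is self-adjoint and idempotent. -/
def IsProjection {A : Type*} [Mul A] [Star A] (p : A) : Prop :=
  star p = p ∧ p * p = p

/-- The topological stable rank of the subalgebra (or corner) of an ambient topological
algebra `A` given by the subset `S`, whose unit is `e`. -/
noncomputable def relTSR {A : Type*} [Ring A] [TopologicalSpace A] (S : Set A) (e : A) : ℕ∞ :=
  sInf ((Nat.cast : ℕ → ℕ∞) ''
    {n : ℕ | 0 < n ∧
      Dense {a : Fin n → S | ∃ b : Fin n → S, (∑ i, (b i : A) * (a i : A)) = e}})

/-- The corner `pSp` of the subalgebra `S`, cut by the projection `p`. -/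
def cornerIn {A : Type*} [Mul A] (S : Set A) (p : A) : Set A := {x ∈ S | p * x * p = x}

/-- `S` is a unital C*-subalgebra of `A` (with the same unit). -/
structure IsUnitalCStarSubalgebra {A : Type*} [CStarAlgebra A] (S : Set A) : Prop where
  isClosed : IsClosed S
  one_mem : (1 : A) ∈ S
  add_mem : ∀ {x y : A}, x ∈ S → y ∈ S → x + y ∈ S
  smul_mem : ∀ (c : ℂ) {x : A}, x ∈ S → c • x ∈ S
  mul_mem : ∀ {x y : A}, x ∈ S → y ∈ S → x * y ∈ S
  star_mem : ∀ {x : A}, x ∈ S → star x ∈ S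

/-- The restriction of `E` to the subalgebra `S` is a faithful conditional expectation
from `S` onto the subalgebra `SA ⊆ S`. -/
structure IsCondExpOn {T : Type*} [CStarAlgebra T] (S SA : Set T) (E : T → T) : Prop where
  map_add : ∀ x ∈ S, ∀ y ∈ S, E (x + y) = E x + E y
  map_smul : ∀ (c : ℂ), ∀ x ∈ S, E (c • x) = c • E x
  mem : ∀ x ∈ S, E x ∈ SA
  fixes : ∀ a ∈ SA, E a = a
  bimodule : ∀ a ∈ SA, ∀ b ∈ SA, ∀ x ∈ S, E (a * x * b) = a * E x * b
  map_star : ∀ x ∈ S, E (star x) = star (E x)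
  positive : ∀ x ∈ S, ∃ y ∈ SA, E (star x * x) = star y * y
  faithful : ∀ x ∈ S, E (star x * x) = 0 → x = 0

/-- `u` is a quasi-basis for the conditional expectation `E` on the subalgebra `S`,
witnessing that `E` is of index-finite type. -/
def IsQuasiBasisOn {T : Type*} [CStarAlgebra T] (S : Set T) (E : T → T)
    {m : ℕ} (u : Fin m → T) : Prop :=
  (∀ i, u i ∈ S) ∧
    ∀ x ∈ S, (x = ∑ i, u i * E (star (u i) * x)) ∧ (x = ∑ i, E (x * u i) * star (u i))

/-- The set of finite sums `∑ xᵢ * e * yᵢ` with `xᵢ, yᵢ ∈ S`. -/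
def eSpan {T : Type*} [Ring T] (S : Set T) (e : T) : Set T :=
  {z | ∃ (m : ℕ) (x y : Fin m → T),
    (∀ i, x i ∈ S) ∧ (∀ i, y i ∈ S) ∧ z = ∑ i, x i * e * y i}

/-- The relative commutant `SA' ∩ S`. -/
def relCommutant {T : Type*} [Mul T] (SA S : Set T) : Set T :=
  {x ∈ S | ∀ a ∈ SA, a * x = x * a}

/-- `SB2` together with the Jones projection `e` is the C* basic construction of the
inclusion `SA ⊆ SB` with respect to the conditional expectation `E : SB → SA`
(of index-finite type), all inside a common ambient C*-algebra. -/
structure IsBasicConstruction {T : Type*} [CStarAlgebra T]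
    (SA SB SB2 : Set T) (E : T → T) (e : T) : Prop where
  proj : IsProjection e
  mem : e ∈ SB2
  commutes : ∀ a ∈ SA, a * e = e * a
  expectation : ∀ b ∈ SB, e * b * e = E b * e
  inj : ∀ b ∈ SB, b * e = 0 → b = 0
  span : SB2 = eSpan SB e

/-- `E2` is the dual conditional expectation of `E` on the basic construction
`SB2 = SB e SB`, determined by `E2 (x * e * y) = (Index E)⁻¹ * (x * y)`, where
`Index E = ∑ uᵢ * uᵢ*` for a quasi-basis `u` of `E`. -/
structure IsDualCondExp {T : Type*} [CStarAlgebra T] (SB SB2 : Set T)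
    (E E2 : T → T) (e : T) {m : ℕ} (u : Fin m → T) : Prop where
  condExp : IsCondExpOn SB2 SB E2
  index_formula : ∃ w : T,
    ((∑ i, u i * star (u i)) * w = 1 ∧ w * (∑ i, u i * star (u i)) = 1) ∧
    ∀ x ∈ SB, ∀ y ∈ SB, E2 (x * e * y) = w * (x * y)


open scoped ContinuousMapZero

lemma cfcn_real_mem {T : Type*} [CStarAlgebra T] {S : Set T}
    (hS : IsClosed S)
    (h0 : (0 : T) ∈ S)
    (hadd : ∀ {x y : T}, x ∈ S → y ∈ S → x + y ∈ S)
    (hmul : ∀ {x y : T}, x ∈ S → y ∈ S → x * y ∈ S)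
    (hsmul : ∀ (c : ℝ) {x : T}, x ∈ S → c • x ∈ S)
    (hstar : ∀ {x : T}, x ∈ S → star x ∈ S)
    {z : T} (hz : IsSelfAdjoint z) (hzS : z ∈ S)
    (f : ℝ → ℝ) (hf : ContinuousOn f (quasispectrum ℝ z)) (hf0 : f 0 = 0) :
    cfcₙ f z ∈ S := by
  rw [cfcₙ_apply f z hf hf0 hz]
  have h₁ := (cfcₙHom_isClosedEmbedding hz).continuous.range_subset_closure_image_dense
    (ContinuousMapZero.adjoin_id_dense (s := quasispectrum ℝ z))
    ⟨(⟨⟨_, hf.restrict⟩, hf0⟩ : C(quasispectrum ℝ z, ℝ)₀), rfl⟩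
  refine closure_minimal ?_ hS h₁
  rintro - ⟨q, hq, rfl⟩
  rw [SetLike.mem_coe] at hq
  induction hq using NonUnitalStarAlgebra.adjoin_induction with
  | mem x hx =>
    rw [Set.mem_singleton_iff] at hx
    subst hx
    have hid : cfcₙHom hz (ContinuousMapZero.id _) = z := cfcₙHom_id (R := ℝ) hz
    rw [hid]
    exact hzS
  | add x y hx hy hpx hpy => rw [map_add]; exact hadd hpx hpy
  | zero => rw [map_zero]; exact h0
  | mul x y hx hy hpx hpy => rw [map_mul]; exact hmul hpx hpy
  | smul r x hx hpx => rw [map_smul]; exact hsmul r hpx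
  | star x hx hpx => rw [map_star]; exact hstar hpx

/-- Let `SA ⊆ SB` be a unital inclusion of C*-subalgebras of the
C*-algebra `T` (playing the role of the basic construction `B₂`), with a faithful
conditional expectation `E : SB → SA` of index-finite type, Jones projection `e₁` and
dual conditional expectation `E₂ : T = B₂ → SB`, and let `v` be a quasi-basis for `E₂`
consisting of elements of the relative commutant `SA' ∩ B₂`. Then for every projection
`p ∈ SA`, the restriction of `E₂` to the corner `p B₂ p` is a faithful conditional
expectation from `p B₂ p` onto `p SB p`, and `(fun k => p * v k)` is a quasi-basis
for it. -/
theorem restriction_of_dual_condExp_to_corner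
    {T : Type*} [CStarAlgebra T] (SA SB : Set T)
    (hSA : IsUnitalCStarSubalgebra SA) (hSB : IsUnitalCStarSubalgebra SB)
    (hAB : SA ⊆ SB)
    (E : T → T) (hE : IsCondExpOn SB SA E)
    {m : ℕ} (u : Fin m → T) (hu : IsQuasiBasisOn SB E u)
    (e₁ : T) (hbasic : IsBasicConstruction SA SB Set.univ E e₁)
    (E₂ : T → T) (hdual : IsDualCondExp SB Set.univ E E₂ e₁ u)
    {n : ℕ} (v : Fin n → T) (hv : IsQuasiBasisOn Set.univ E₂ v)
    (hv' : ∀ k, v k ∈ relCommutant SA Set.univ) :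
    ∀ p ∈ SA, IsProjection p →
      IsCondExpOn (cornerIn Set.univ p) (cornerIn SB p) E₂ ∧
      IsQuasiBasisOn (cornerIn Set.univ p) E₂ (fun k => p * v k) := by
  intro p hp hproj
  obtain ⟨hps, hpp⟩ := hproj
  have hpB : p ∈ SB := hAB hp
  have hdc := hdual.condExp
  -- absorption facts
  have habs : ∀ x : T, p * x * p = x → p * x = x ∧ x * p = x := by
    intro x hx
    constructor
    · conv_lhs => rw [← hx]
      rw [← mul_assoc, ← mul_assoc, hpp, hx]
    · conv_lhs => rw [← hx]
      rw [mul_assoc, hpp, hx]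
  have hstarc : ∀ x : T, p * x * p = x → p * star x * p = star x := by
    intro x hx
    have h1 : p * star x = star x := by
      conv_lhs => rw [← hps]
      rw [← star_mul, (habs x hx).2]
    have h2 : star x * p = star x := by
      conv_lhs => rw [← hps]
      rw [← star_mul, (habs x hx).1]
    rw [h1, h2]
  have h0SB : (0 : T) ∈ SB := by simpa using hSB.smul_mem 0 hSB.one_mem
  constructor
  · -- the conditional expectation on the corner
    refine ⟨fun x _ y _ => hdc.map_add x (Set.mem_univ x) y (Set.mem_univ y),
      fun c x _ => hdc.map_smul c x (Set.mem_univ x),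
      fun x hx => ⟨hdc.mem x (Set.mem_univ x), ?_⟩,
      fun a ha => hdc.fixes a ha.1,
      fun a ha b hb x _ => hdc.bimodule a ha.1 b hb.1 x (Set.mem_univ x),
      fun x _ => hdc.map_star x (Set.mem_univ x),
      ?_,
      fun x _ h => hdc.faithful x (Set.mem_univ x) h⟩
    · have hb := hdc.bimodule p hpB p hpB x (Set.mem_univ x)
      rw [← hb, hx.2]
    · -- positivity
      intro x hx
      letI : PartialOrder T := CStarAlgebra.spectralOrder T
      letI : StarOrderedRing T := CStarAlgebra.spectralOrderedRing T
      obtain ⟨y, hySB, hy⟩ := hdc.positive x (Set.mem_univ x)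
      have hz_sa : IsSelfAdjoint (E₂ (star x * x)) := by
        rw [hy]; exact IsSelfAdjoint.star_mul_self y
      have hz_nn : (0 : T) ≤ E₂ (star x * x) := by
        rw [hy]; exact star_mul_self_nonneg y
      have hzSB : E₂ (star x * x) ∈ SB := hdc.mem _ (Set.mem_univ _)
      have hxx : p * (star x * x) * p = star x * x := by
        have h1 : p * star x = star x := (habs (star x) (hstarc x hx.2)).1
        have h2 : x * p = x := (habs x hx.2).2
        rw [← mul_assoc, h1, mul_assoc, h2]
      have hpzp : p * E₂ (star x * x) * p = E₂ (star x * x) := by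
        have hb := hdc.bimodule p hpB p hpB (star x * x) (Set.mem_univ _)
        rw [← hb, hxx]
      -- the corner as a closed nonunital star subalgebra
      have hS0closed : IsClosed {w : T | w ∈ SB ∧ p * w * p = w} := by
        have : {w : T | w ∈ SB ∧ p * w * p = w}
            = SB ∩ {w : T | (fun w => p * w * p) w = id w} := rfl
        rw [this]
        exact hSB.isClosed.inter
          (isClosed_eq ((continuous_const.mul continuous_id).mul continuous_const) continuous_id)
      have hw : cfcₙ Real.sqrt (E₂ (star x * x)) ∈ {w : T | w ∈ SB ∧ p * w * p = w} := by
        refine cfcn_real_mem hS0closed ⟨h0SB, by simp⟩ ?_ ?_ ?_ ?_ hz_sa ⟨hzSB, hpzp⟩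
          Real.sqrt Real.continuous_sqrt.continuousOn Real.sqrt_zero
        · rintro a b ⟨ha1, ha2⟩ ⟨hb1, hb2⟩
          exact ⟨hSB.add_mem ha1 hb1, by rw [mul_add, add_mul, ha2, hb2]⟩
        · rintro a b ⟨ha1, ha2⟩ ⟨hb1, hb2⟩
          refine ⟨hSB.mul_mem ha1 hb1, ?_⟩
          rw [← mul_assoc, (habs a ha2).1, mul_assoc, (habs b hb2).2]
        · rintro c a ⟨ha1, ha2⟩
          refine ⟨by rw [← Complex.coe_smul]; exact hSB.smul_mem _ ha1, ?_⟩
          rw [mul_smul_comm, smul_mul_assoc, ha2]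
        · rintro a ⟨ha1, ha2⟩
          exact ⟨hSB.star_mem ha1, hstarc a ha2⟩
      have hw_sa : IsSelfAdjoint (cfcₙ Real.sqrt (E₂ (star x * x))) := IsSelfAdjoint.cfcₙ
      have hww : cfcₙ Real.sqrt (E₂ (star x * x)) * cfcₙ Real.sqrt (E₂ (star x * x))
          = E₂ (star x * x) := by
        rw [← cfcₙ_mul Real.sqrt Real.sqrt (E₂ (star x * x))
          Real.continuous_sqrt.continuousOn Real.sqrt_zero
          Real.continuous_sqrt.continuousOn Real.sqrt_zero]
        calc cfcₙ (fun t : ℝ => Real.sqrt t * Real.sqrt t) (E₂ (star x * x))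
            = cfcₙ (id : ℝ → ℝ) (E₂ (star x * x)) := cfcₙ_congr fun t ht =>
              Real.mul_self_sqrt (quasispectrum_nonneg_of_nonneg _ hz_nn t ht)
          _ = E₂ (star x * x) := cfcₙ_id ℝ _ hz_sa
      exact ⟨cfcₙ Real.sqrt (E₂ (star x * x)), ⟨hw.1, hw.2⟩, by rw [hw_sa.star_eq, hww]⟩
  · -- the quasi-basis
    refine ⟨fun i => ⟨Set.mem_univ _, ?_⟩, ?_⟩
    · have hcomm : p * v i = v i * p := (hv' i).2 p hp
      show p * (p * v i) * p = p * v i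
      rw [← mul_assoc, hpp, hcomm, mul_assoc, hpp]
    · intro x hx
      have hpx : p * x = x := (habs x hx.2).1
      have hxp : x * p = x := (habs x hx.2).2
      constructor
      · have key1 : ∀ k, (p * v k) * E₂ (star (p * v k) * x)
            = p * (v k * E₂ (star (v k) * x)) := by
          intro k
          have h1 : star (p * v k) * x = star (v k) * x := by
            rw [star_mul, hps, mul_assoc, hpx]
          rw [h1, mul_assoc]
        calc x = p * x := hpx.symm
          _ = p * ∑ k, v k * E₂ (star (v k) * x) := by rw [← (hv.2 x (Set.mem_univ x)).1]
          _ = ∑ k, p * (v k * E₂ (star (v k) * x)) := by rw [Finset.mul_sum]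
          _ = ∑ k, (p * v k) * E₂ (star (p * v k) * x) := by simp_rw [key1]
      · have key2 : ∀ k, E₂ (x * (p * v k)) * star (p * v k)
            = (E₂ (x * v k) * star (v k)) * p := by
          intro k
          have h1 : x * (p * v k) = x * v k := by rw [← mul_assoc, hxp]
          have h2 : star (p * v k) = star (v k) * p := by rw [star_mul, hps]
          rw [h1, h2, mul_assoc]
        calc x = x * p := hxp.symm
          _ = (∑ k, E₂ (x * v k) * star (v k)) * p := by rw [← (hv.2 x (Set.mem_univ x)).2]
          _ = ∑ k, (E₂ (x * v k) * star (v k)) * p := by rw [Finset.sum_mul]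
          _ = ∑ k, E₂ (x * (p * v k)) * star (p * v k) := by simp_rw [key2]
end

section
/- Let A be a unital C*-algebra with tsr(A) ≥ 2n for some positive integer n. Then for any action α of Z/2Z on A (i.e., any symmetry), tsr(A ⋊_α Z/2Z) ≥ n. -/
open scoped BigOperators

/-- The topological stable rank of a unital topological algebra. -/
noncomputable def tsr (A : Type*) [Ring A] [TopologicalSpace A] : ℕ∞ :=
  sInf ((Nat.cast : ℕ → ℕ∞) ''
    {n : ℕ | 0 < n ∧ Dense {a : Fin n → A | ∃ b : Fin n → A, (∑ i, b i * a i) = 1}})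

/-- `α` is an action of the group `G` by `*`-automorphisms on the C*-algebra `A`. -/
structure IsCStarAction (G : Type*) [Group G] (A : Type*) [CStarAlgebra A]
    (α : G → A → A) : Prop where
  map_add : ∀ g x y, α g (x + y) = α g x + α g y
  map_mul : ∀ g x y, α g (x * y) = α g x * α g y
  map_smul : ∀ g (c : ℂ) x, α g (c • x) = c • α g x
  map_star : ∀ g x, α g (star x) = star (α g x)
  map_one : ∀ g, α g 1 = 1
  one_apply : ∀ x, α 1 x = x
  mul_apply : ∀ g h x, α (g * h) x = α g (α h x)

/-- `B` is (a copy of) the crossed product `A ⋊_α G` of the unital C*-algebra `A` by an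
action `α` of the finite group `G`: it contains `A` via the unital `*`-embedding `ι`,
contains implementing unitaries `u g`, and equals `⊕_g ι(A) (u g)` (existence and
uniqueness of coefficients).  For a finite group this characterizes the (full = reduced)
crossed product uniquely. -/
structure CrossedProductStructure (G : Type*) [Group G] [Fintype G]
    (A B : Type*) [CStarAlgebra A] [CStarAlgebra B] (α : G → A → A) where
  ι : A → B
  u : G → B
  ι_add : ∀ x y, ι (x + y) = ι x + ι y
  ι_mul : ∀ x y, ι (x * y) = ι x * ι y
  ι_smul : ∀ (c : ℂ) (x : A), ι (c • x) = c • ι x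
  ι_star : ∀ x, ι (star x) = star (ι x)
  ι_one : ι 1 = 1
  ι_injective : Function.Injective ι
  u_one : u 1 = 1
  u_mul : ∀ g h, u g * u h = u (g * h)
  u_star : ∀ g, star (u g) = u g⁻¹
  covariant : ∀ g a, u g * ι a = ι (α g a) * u g
  repr_exists_unique : ∀ b : B, ∃! c : G → A, b = ∑ g, ι (c g) * u g

/-- `I` is a closed two-sided ideal of the C*-subalgebra `S`. -/
def IsClosedIdealIn {A : Type*} [CStarAlgebra A] (S I : Set A) : Prop :=
  I ⊆ S ∧ IsClosed I ∧ (0 : A) ∈ I ∧ (∀ x ∈ I, ∀ y ∈ I, x + y ∈ I) ∧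
    (∀ (c : ℂ), ∀ x ∈ I, c • x ∈ I) ∧ (∀ s ∈ S, ∀ x ∈ I, s * x ∈ I ∧ x * s ∈ I)

/-- The C*-subalgebra `S` is simple. -/
def IsSimpleIn {A : Type*} [CStarAlgebra A] (S : Set A) : Prop :=
  (∃ x ∈ S, x ≠ 0) ∧ ∀ I : Set A, IsClosedIdealIn S I → I = {0} ∨ I = S

/-- `H` is a hereditary C*-subalgebra of the C*-subalgebra `S`. -/
def IsHereditarySubalgebraIn {A : Type*} [CStarAlgebra A] [PartialOrder A]
    [StarOrderedRing A] (S H : Set A) : Prop :=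
  H ⊆ S ∧ IsClosed H ∧ (0 : A) ∈ H ∧ (∀ x ∈ H, ∀ y ∈ H, x + y ∈ H) ∧
    (∀ (c : ℂ), ∀ x ∈ H, c • x ∈ H) ∧ (∀ x ∈ H, ∀ y ∈ H, x * y ∈ H) ∧
    (∀ x ∈ H, star x ∈ H) ∧
    (∀ x ∈ S, ∀ y ∈ H, 0 ≤ x → x ≤ y → x ∈ H)

/-- The C*-subalgebra `S` has Property (SP). -/
def HasPropertySPIn {A : Type*} [CStarAlgebra A] [PartialOrder A] [StarOrderedRing A]
    (S : Set A) : Prop :=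
  ∀ H : Set A, IsHereditarySubalgebraIn S H → H ≠ {0} →
    ∃ p ∈ H, IsProjection p ∧ p ≠ 0

namespace TsrAux

abbrev G2 := Multiplicative (ZMod 2)

def gg : G2 := Multiplicative.ofAdd 1

lemma sum_G2 {M : Type*} [AddCommMonoid M] (f : G2 → M) :
    ∑ g, f g = f 1 + f gg := by
  have h : (Finset.univ : Finset G2) = {1, gg} := by decide
  rw [h, Finset.sum_pair (by decide)]

variable {A B : Type*} [CStarAlgebra A] [CStarAlgebra B]
  {α : G2 → A → A}

/-- pushing density through a continuous surjection -/
lemma dense_push {X Y : Type*} [TopologicalSpace X] [TopologicalSpace Y]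
    {F : X → Y} (hF : Continuous F) (hsurj : Function.Surjective F)
    {S : Set X} {T : Set Y} (hS : Dense S) (him : ∀ x ∈ S, F x ∈ T) : Dense T := by
  intro y
  obtain ⟨x, rfl⟩ := hsurj y
  have h1 : F x ∈ closure (F '' S) := by
    apply image_closure_subset_closure_image hF
    exact ⟨x, hS x, rfl⟩
  exact closure_mono (fun z hz => by obtain ⟨w, hw, rfl⟩ := hz; exact him w hw) h1

section cp
variable (cp : CrossedProductStructure G2 A B α)

lemma ι_zero : cp.ι 0 = 0 := by simpa using cp.ι_smul 0 0

def iotaHom : A →⋆ₙₐ[ℂ] B :=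
  { toFun := cp.ι
    map_smul' := fun c x => by simpa using cp.ι_smul c x
    map_zero' := ι_zero cp
    map_add' := cp.ι_add
    map_mul' := cp.ι_mul
    map_star' := cp.ι_star }

lemma iota_continuous : Continuous cp.ι :=
  AddMonoidHomClass.continuous_of_bound (iotaHom cp) 1 (fun x => by
    simpa using NonUnitalStarAlgHom.norm_apply_le (iotaHom cp) x)

def alphaHom (hα : IsCStarAction G2 A α) (g : G2) : A →⋆ₙₐ[ℂ] A :=
  { toFun := α g
    map_smul' := fun c x => by simpa using hα.map_smul g c x
    map_zero' := by simpa using hα.map_smul g 0 0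
    map_add' := hα.map_add g
    map_mul' := hα.map_mul g
    map_star' := hα.map_star g }

lemma alpha_continuous (hα : IsCStarAction G2 A α) (g : G2) : Continuous (α g) :=
  AddMonoidHomClass.continuous_of_bound (alphaHom hα g) 1 (fun x => by
    simpa using NonUnitalStarAlgHom.norm_apply_le (alphaHom hα g) x)

lemma alpha_alpha (hα : IsCStarAction G2 A α) (x : A) : α gg (α gg x) = x := by
  rw [← hα.mul_apply]
  have h : gg * gg = 1 := by decide
  rw [h, hα.one_apply]

def Tlin : (A × A) →ₗ[ℂ] B where
  toFun := fun p => cp.ι p.1 + cp.ι p.2 * cp.u gg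
  map_add' := fun p q => by
    simp only [Prod.fst_add, Prod.snd_add, cp.ι_add, add_mul]; abel
  map_smul' := fun c p => by
    simp only [Prod.smul_fst, Prod.smul_snd, cp.ι_smul, smul_mul_assoc, smul_add,
      RingHom.id_apply]

def TCL : (A × A) →L[ℂ] B :=
  ⟨Tlin cp, by
    exact (((iota_continuous cp).comp continuous_fst).add
      (((iota_continuous cp).comp continuous_snd).mul continuous_const))⟩

@[simp] lemma TCL_apply (p : A × A) : TCL cp p = cp.ι p.1 + cp.ι p.2 * cp.u gg := rfl

lemma repr_formula (x y : A) :
    (∑ g : G2, cp.ι ((fun g => if g = 1 then x else y) g) * cp.u g)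
      = cp.ι x + cp.ι y * cp.u gg := by
  rw [sum_G2]
  beta_reduce
  rw [if_pos rfl, if_neg (by decide : ¬ (gg = 1)), cp.u_one, mul_one]

lemma T_inj : Function.Injective (TCL cp) := by
  intro p q h
  obtain ⟨c, hc, huniq⟩ := cp.repr_exists_unique (TCL cp p)
  have h1 : (fun g => if g = 1 then p.1 else p.2) = c :=
    huniq _ (by beta_reduce; rw [repr_formula cp p.1 p.2]; rfl)
  have h2 : (fun g => if g = 1 then q.1 else q.2) = c :=
    huniq _ (by beta_reduce; rw [repr_formula cp q.1 q.2, h]; rfl)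
  have h3 := h1.trans h2.symm
  have e1 := congrFun h3 1
  have e2 := congrFun h3 gg
  simp only [if_pos rfl, if_neg (by decide : ¬ (gg = (1:G2)))] at e1 e2
  exact Prod.ext e1 e2

lemma T_surj : Function.Surjective (TCL cp) := by
  intro b
  obtain ⟨c, hc, -⟩ := cp.repr_exists_unique b
  refine ⟨(c 1, c gg), ?_⟩
  rw [sum_G2, cp.u_one, mul_one] at hc
  rw [TCL_apply]
  exact hc.symm

noncomputable def TE : (A × A) ≃L[ℂ] B :=
  ContinuousLinearEquiv.ofBijective (TCL cp)
    (LinearMap.ker_eq_bot.mpr (T_inj cp))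
    (LinearMap.range_eq_top.mpr (T_surj cp))

@[simp] lemma TE_apply (p : A × A) : TE cp p = cp.ι p.1 + cp.ι p.2 * cp.u gg := by
  rw [show ⇑(TE cp) = ⇑(TCL cp) from ContinuousLinearEquiv.coeFn_ofBijective _ _ _]
  rfl

lemma key_prod (p q x y : A) :
    (cp.ι p + cp.ι q * cp.u gg) * (cp.ι x + cp.ι y * cp.u gg)
      = cp.ι (p * x + q * α gg y) + cp.ι (p * y + q * α gg x) * cp.u gg := by
  have hux : cp.u gg * cp.ι x = cp.ι (α gg x) * cp.u gg := cp.covariant gg x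
  have huy : cp.u gg * cp.ι y = cp.ι (α gg y) * cp.u gg := cp.covariant gg y
  have huu : cp.u gg * cp.u gg = 1 := by
    rw [cp.u_mul, (by decide : gg * gg = (1:G2)), cp.u_one]
  rw [cp.ι_add, cp.ι_add, cp.ι_mul, cp.ι_mul, cp.ι_mul, cp.ι_mul]
  calc (cp.ι p + cp.ι q * cp.u gg) * (cp.ι x + cp.ι y * cp.u gg)
      = cp.ι p * cp.ι x + cp.ι p * cp.ι y * cp.u gg
        + cp.ι q * (cp.u gg * cp.ι x) + cp.ι q * ((cp.u gg * cp.ι y) * cp.u gg) := by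
        noncomm_ring
    _ = cp.ι p * cp.ι x + cp.ι p * cp.ι y * cp.u gg
        + cp.ι q * (cp.ι (α gg x) * cp.u gg) + cp.ι q * ((cp.ι (α gg y) * cp.u gg) * cp.u gg) := by
        rw [hux, huy]
    _ = cp.ι p * cp.ι x + cp.ι p * cp.ι y * cp.u gg
        + cp.ι q * (cp.ι (α gg x) * cp.u gg) + cp.ι q * (cp.ι (α gg y) * (cp.u gg * cp.u gg)) := by
        noncomm_ring
    _ = _ := by rw [huu, mul_one]; noncomm_ring

end cp

end TsrAux

namespace TsrAux
variable {A B : Type*} [CStarAlgebra A] [CStarAlgebra B] {α : G2 → A → A}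

lemma dense_step (hα : IsCStarAction G2 A α) (cp : CrossedProductStructure G2 A B α) (m : ℕ)
    (hdense : Dense {a : Fin m → B | ∃ b : Fin m → B, (∑ i, b i * a i) = 1}) :
    Dense {a : Fin (m * 2) → A | ∃ b : Fin (m * 2) → A, (∑ i, b i * a i) = 1} := by
  classical
  set e := (finProdFinEquiv : Fin m × Fin 2 ≃ Fin (m * 2)) with he
  set F : (Fin m → B) → (Fin (m * 2) → A) := fun b j =>
    if (e.symm j).2 = 0 then ((TE cp).symm (b (e.symm j).1)).1
    else α gg (((TE cp).symm (b (e.symm j).1)).2) with hF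
  refine dense_push (F := F) ?_ ?_ hdense ?_
  · -- continuity of F
    apply continuous_pi
    intro j
    by_cases h : (e.symm j).2 = 0
    · simp only [hF, if_pos h]
      exact Continuous.fst ((TE cp).symm.continuous.comp (continuous_apply _))
    · simp only [hF, if_neg h]
      exact (alpha_continuous hα gg).comp
        (Continuous.snd ((TE cp).symm.continuous.comp (continuous_apply _)))
  · -- surjectivity of F
    intro a
    refine ⟨fun i => TE cp (a (e (i, 0)), α gg (a (e (i, 1)))), ?_⟩
    funext j
    simp only [hF, ContinuousLinearEquiv.symm_apply_apply]
    by_cases h : (e.symm j).2 = 0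
    · rw [if_pos h]
      rw [show ((e.symm j).1, (0 : Fin 2)) = e.symm j from Prod.ext rfl h.symm,
        e.apply_symm_apply]
    · rw [if_neg h]
      have hv : ((e.symm j).2 : ℕ) ≠ 0 := fun hh => h (Fin.ext hh)
      have h1 : (e.symm j).2 = 1 := Fin.ext (by have := (e.symm j).2.isLt; omega)
      rw [alpha_alpha hα,
        show ((e.symm j).1, (1 : Fin 2)) = e.symm j from Prod.ext rfl h1.symm,
        e.apply_symm_apply]
  · -- F maps Lg_m(B) into Lg_{2m}(A)
    rintro b' ⟨z, hz⟩
    have hb' : ∀ i, b' i = cp.ι (((TE cp).symm (b' i)).1)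
        + cp.ι (((TE cp).symm (b' i)).2) * cp.u gg := fun i => by
      conv_lhs => rw [← (TE cp).apply_symm_apply (b' i)]
      rw [TE_apply]
    have hz' : ∀ i, z i = cp.ι (((TE cp).symm (z i)).1)
        + cp.ι (((TE cp).symm (z i)).2) * cp.u gg := fun i => by
      conv_lhs => rw [← (TE cp).apply_symm_apply (z i)]
      rw [TE_apply]
    set x : Fin m → A := fun i => ((TE cp).symm (b' i)).1 with hx
    set y : Fin m → A := fun i => ((TE cp).symm (b' i)).2 with hy
    set p : Fin m → A := fun i => ((TE cp).symm (z i)).1 with hp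
    set q : Fin m → A := fun i => ((TE cp).symm (z i)).2 with hq
    have hpair : ((∑ i, (p i * x i + q i * α gg (y i))),
        (∑ i, (p i * y i + q i * α gg (x i))))
        = ∑ i, ((p i * x i + q i * α gg (y i)), (p i * y i + q i * α gg (x i))) := by
      apply Prod.ext <;> simp [Prod.fst_sum, Prod.snd_sum]
    have hsum : TE cp ((∑ i, (p i * x i + q i * α gg (y i))),
        (∑ i, (p i * y i + q i * α gg (x i)))) = 1 := by
      rw [hpair, map_sum]
      calc ∑ i, TE cp ((p i * x i + q i * α gg (y i)), (p i * y i + q i * α gg (x i)))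
          = ∑ i, z i * b' i := Finset.sum_congr rfl fun i _ => by
            rw [TE_apply, ← key_prod cp, ← hb' i, ← hz' i]
        _ = 1 := hz
    have h10 : TE cp ((1 : A), (0 : A)) = 1 := by
      rw [TE_apply]; simp [cp.ι_one, ι_zero cp]
    have hcomp : (∑ i, (p i * x i + q i * α gg (y i))) = 1 :=
      congrArg Prod.fst ((TE cp).injective (hsum.trans h10.symm))
    refine ⟨fun j => if (e.symm j).2 = 0 then p (e.symm j).1 else q (e.symm j).1, ?_⟩
    have hn10 : ¬((1 : Fin 2) = 0) := by decide
    calc ∑ j, (if (e.symm j).2 = 0 then p (e.symm j).1 else q (e.symm j).1) * F b' j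
        = ∑ pr : Fin m × Fin 2,
            (if (e.symm (e pr)).2 = 0 then p (e.symm (e pr)).1 else q (e.symm (e pr)).1)
              * F b' (e pr) :=
          (Equiv.sum_comp e _).symm
      _ = ∑ i, (p i * x i + q i * α gg (y i)) := by
          rw [Fintype.sum_prod_type]
          refine Finset.sum_congr rfl fun i _ => ?_
          rw [Fin.sum_univ_two]
          simp only [hF, e.symm_apply_apply]
          simp only [if_true, if_neg hn10]
          rfl
      _ = 1 := hcomp
end TsrAux


/-- If `A` is a unital C*-algebra with `tsr(A) ≥ 2n` (`n ≥ 1`), then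
for every action `α` of `ℤ/2ℤ` on `A` (i.e. every symmetry), the crossed product
`B = A ⋊_α ℤ/2ℤ` satisfies `tsr(B) ≥ n`. -/
theorem tsr_crossed_product_symmetry_ge
    {A B : Type*} [CStarAlgebra A] [CStarAlgebra B]
    (n : ℕ) (hn : 0 < n) (htsr : (2 * n : ℕ∞) ≤ tsr A)
    (α : Multiplicative (ZMod 2) → A → A)
    (hα : IsCStarAction (Multiplicative (ZMod 2)) A α)
    (cp : CrossedProductStructure (Multiplicative (ZMod 2)) A B α) :
    (n : ℕ∞) ≤ tsr B := by
  refine le_sInf fun x hx => ?_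
  obtain ⟨m, ⟨hm, hdense⟩, rfl⟩ := hx
  have key := TsrAux.dense_step hα cp m hdense
  have hA : tsr A ≤ ((m * 2 : ℕ) : ℕ∞) := sInf_le ⟨m * 2, ⟨by omega, key⟩, rfl⟩
  have h2 : ((2 * n : ℕ) : ℕ∞) ≤ ((m * 2 : ℕ) : ℕ∞) := le_trans (by exact_mod_cast htsr) hA
  have h3 : 2 * n ≤ m * 2 := by exact_mod_cast h2
  exact_mod_cast (by omega : n ≤ m)
end
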